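/- Let σ and ρ be fixed-point-free involutions of {1,…,2n}. Then ρ covers σ in the Bruhat order restricted to fixed-point-free involutions if and only if there exists a transposition t with ρ = t∘σ∘t and l(ρ) = l(σ) + 2. -/

import Mathlib

/-- A fixed-point-free involution. -/
def isFPF {m : ℕ} (ι : Equiv.Perm (Fin m)) : Prop :=
  ι * ι = 1 ∧ ∀ i, ι i ≠ i

/-- The length (number of inversions) of a permutation of `Fin m`. -/
def invLength {m : ℕ} (π : Equiv.Perm (Fin m)) : ℕ :=
  Finset.card (Finset.univ.filter fun p : Fin m × Fin m => p.1 < p.2 ∧ π p.2 < π p.1)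

/-- The rank matrix entry `r_{ij}(π) = #{k ≤ i : π(k) ≤ j}` (0-based indices:
`rkm π i j` is the 1-based entry `r_{i+1, j+1}`). -/
def rkm {m : ℕ} (π : Equiv.Perm (Fin m)) (i j : Fin m) : ℕ :=
  Finset.card (Finset.univ.filter fun k : Fin m => k ≤ i ∧ π k ≤ j)

/-- Bruhat order: `σ ≤ ρ` iff every rank matrix entry of `σ` is at least that of `ρ`. -/
def bruhatLE {m : ℕ} (σ ρ : Equiv.Perm (Fin m)) : Prop :=
  ∀ i j, rkm ρ i j ≤ rkm σ i j

/-- Strict Bruhat order. -/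
def bruhatLT {m : ℕ} (σ ρ : Equiv.Perm (Fin m)) : Prop :=
  bruhatLE σ ρ ∧ σ ≠ ρ

/-- `ρ` covers `σ` in the Bruhat order restricted to fixed-point-free involutions. -/
def fpfCovers {m : ℕ} (σ ρ : Equiv.Perm (Fin m)) : Prop :=
  bruhatLT σ ρ ∧ ¬ ∃ τ, isFPF τ ∧ bruhatLT σ τ ∧ bruhatLT τ ρ

open Finset Equiv

variable {m : ℕ}

/-- card of a filter over univ splits off two designated points -/
lemma card_filter_two (P Q : Fin m → Prop) [DecidablePred P] [DecidablePred Q]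
    (a b : Fin m) (hab : a ≠ b) (h : ∀ k, k ≠ a → k ≠ b → (P k ↔ Q k)) :
    (univ.filter P).card + (if Q a then 1 else 0) + (if Q b then 1 else 0)
      = (univ.filter Q).card + (if P a then 1 else 0) + (if P b then 1 else 0) := by
  classical
  have key : ∀ (R : Fin m → Prop) [DecidablePred R],
      (univ.filter R).card
        = ((univ \ {a, b}).filter R).card + (if R a then 1 else 0) + (if R b then 1 else 0) := by
    intro R _
    have hsplit : (univ : Finset (Fin m)) = (univ \ {a,b}) ∪ {a, b} := by
      rw [Finset.sdiff_union_of_subset (Finset.subset_univ _)]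
    have h2 : (Finset.filter R ({a,b} : Finset (Fin m))).card
        = (if R a then 1 else 0) + (if R b then 1 else 0) := by
      rw [Finset.filter_insert, Finset.filter_singleton]
      by_cases ha : R a <;> by_cases hb : R b <;>
        simp [ha, hb, Finset.card_insert_of_notMem, hab]
    have h3 : (univ.filter R).card = ((univ \ {a,b}).filter R).card
        + (Finset.filter R ({a,b} : Finset (Fin m))).card := by
      nth_rewrite 1 [hsplit]
      rw [Finset.filter_union, Finset.card_union_of_disjoint]
      exact Finset.disjoint_filter_filter (Finset.sdiff_disjoint)
    omega
  have hPQ : ((univ \ {a,b}).filter P) = ((univ \ {a,b}).filter Q) := by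
    apply Finset.filter_congr
    intro k hk
    simp only [Finset.mem_sdiff, Finset.mem_insert, Finset.mem_singleton] at hk
    push_neg at hk
    simp [h k hk.2.1 hk.2.2]
  rw [key P, key Q, hPQ]; ring

lemma rkm_mul_swap_add (π : Equiv.Perm (Fin m)) (a b i j : Fin m) (hab : a ≠ b) :
    rkm (π * Equiv.swap a b) i j + (if a ≤ i ∧ π a ≤ j then 1 else 0)
        + (if b ≤ i ∧ π b ≤ j then 1 else 0)
      = rkm π i j + (if a ≤ i ∧ π b ≤ j then 1 else 0)
        + (if b ≤ i ∧ π a ≤ j then 1 else 0) := by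
  classical
  have h := card_filter_two (fun k => k ≤ i ∧ (π * Equiv.swap a b) k ≤ j)
      (fun k => k ≤ i ∧ π k ≤ j) a b hab ?_
  · simpa [Equiv.Perm.mul_apply, Equiv.swap_apply_left, Equiv.swap_apply_right, rkm] using h
  · intro k hka hkb
    simp [Equiv.Perm.mul_apply, Equiv.swap_apply_of_ne_of_ne hka hkb]

/-- CL1, descent form: swapping positions `a < b` carrying values `π b < π a`. -/
lemma rkm_mul_swap_lt (π : Equiv.Perm (Fin m)) {a b : Fin m} (hab : a < b)
    (hv : π b < π a) (i j : Fin m) :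
    rkm (π * Equiv.swap a b) i j
      = rkm π i j + (if a ≤ i ∧ i < b ∧ π b ≤ j ∧ j < π a then 1 else 0) := by
  have h := rkm_mul_swap_add π a b i j hab.ne
  simp only [Fin.le_def, Fin.lt_def] at h ⊢
  have h1 : (a:ℕ) < b := hab
  have h2 : (π b : ℕ) < π a := hv
  split_ifs at h ⊢ <;> omega

/-- CL1, ascent form. -/
lemma rkm_mul_swap_gt (π : Equiv.Perm (Fin m)) {a b : Fin m} (hab : a < b)
    (hv : π a < π b) (i j : Fin m) :
    rkm π i j
      = rkm (π * Equiv.swap a b) i j + (if a ≤ i ∧ i < b ∧ π a ≤ j ∧ j < π b then 1 else 0) := by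
  have hv' : (π * Equiv.swap a b) b < (π * Equiv.swap a b) a := by
    simpa [Equiv.Perm.mul_apply] using hv
  have h := rkm_mul_swap_lt (π * Equiv.swap a b) hab hv' i j
  rw [mul_assoc, Equiv.swap_mul_self, mul_one] at h
  simpa [Equiv.Perm.mul_apply] using h

/-- CL2: exact inversion-count change under a descent position swap. -/
lemma invLength_mul_swap_lt (π : Equiv.Perm (Fin m)) {a b : Fin m} (hab : a < b)
    (hv : π b < π a) :
    invLength π = invLength (π * Equiv.swap a b) + 1
      + 2 * (((Finset.Ioo a b)).filter fun k => π b < π k ∧ π k < π a).card := by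
  classical
  set s := Equiv.swap a b with hs
  set π' := π * s with hπ'
  have hπ'a : π' a = π b := by simp [hπ', hs, Equiv.Perm.mul_apply]
  have hπ'b : π' b = π a := by simp [hπ', hs, Equiv.Perm.mul_apply]
  have hπ'k : ∀ k, k ≠ a → k ≠ b → π' k = π k := by
    intro k h1 h2; simp [hπ', hs, Equiv.Perm.mul_apply, Equiv.swap_apply_of_ne_of_ne h1 h2]
  -- the "flipped" pairs
  set F : Finset (Fin m × Fin m) :=
    ((Finset.Ioo a b).image fun k => (a,k)) ∪ ((Finset.Ioo a b).image fun k => (k,b))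
      ∪ {(a,b)} with hF
  have memF : ∀ p : Fin m × Fin m, p ∈ F ↔ (p.1 < p.2 ∧ s p.2 < s p.1) := by
    rintro ⟨x, y⟩
    constructor
    · intro h
      rcases Finset.mem_union.mp h with h' | h3
      · rcases Finset.mem_union.mp h' with h1 | h2
        · rcases Finset.mem_image.mp h1 with ⟨k, hk, heq⟩
          rw [Prod.mk.injEq] at heq
          rcases heq with ⟨rfl, rfl⟩
          rcases Finset.mem_Ioo.mp hk with ⟨hk1, hk2⟩
          refine ⟨hk1, ?_⟩
          rw [hs, Equiv.swap_apply_left, Equiv.swap_apply_of_ne_of_ne (ne_of_gt hk1) (ne_of_lt hk2)]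
          exact hk2
        · rcases Finset.mem_image.mp h2 with ⟨k, hk, heq⟩
          rw [Prod.mk.injEq] at heq
          rcases heq with ⟨rfl, rfl⟩
          rcases Finset.mem_Ioo.mp hk with ⟨hk1, hk2⟩
          refine ⟨hk2, ?_⟩
          rw [hs, Equiv.swap_apply_right, Equiv.swap_apply_of_ne_of_ne (ne_of_gt hk1) (ne_of_lt hk2)]
          exact hk1
      · rw [Finset.mem_singleton, Prod.mk.injEq] at h3
        rcases h3 with ⟨rfl, rfl⟩
        refine ⟨hab, ?_⟩
        rw [hs, Equiv.swap_apply_left, Equiv.swap_apply_right]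
        exact hab
    · rintro ⟨hxy, hflip⟩
      by_cases hxa : x = a
      · subst hxa
        by_cases hyb : y = b
        · subst hyb
          exact Finset.mem_union_right _ (Finset.mem_singleton_self _)
        · refine Finset.mem_union_left _ (Finset.mem_union_left _ (Finset.mem_image.mpr
            ⟨y, Finset.mem_Ioo.mpr ⟨hxy, ?_⟩, rfl⟩))
          by_contra hyb'
          push_neg at hyb'
          have hby : b < y := lt_of_le_of_ne hyb' (Ne.symm hyb)
          rw [hs, Equiv.swap_apply_left,
            Equiv.swap_apply_of_ne_of_ne (ne_of_gt (lt_trans hab hby)) hyb] at hflip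
          exact absurd hflip (not_lt.mpr hby.le)
      · by_cases hyb : y = b
        · subst hyb
          refine Finset.mem_union_left _ (Finset.mem_union_right _ (Finset.mem_image.mpr
            ⟨x, Finset.mem_Ioo.mpr ⟨?_, hxy⟩, rfl⟩))
          by_contra hxa'
          push_neg at hxa'
          have hax : x < a := lt_of_le_of_ne hxa' hxa
          rw [hs, Equiv.swap_apply_right,
            Equiv.swap_apply_of_ne_of_ne hxa (ne_of_lt (lt_trans hax hab))] at hflip
          exact absurd hflip (not_lt.mpr hax.le)
        · exfalso
          by_cases hxb : x = b
          · subst hxb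
            have hya : y ≠ a := ne_of_gt (lt_trans hab hxy)
            rw [hs, Equiv.swap_apply_right,
              Equiv.swap_apply_of_ne_of_ne hya (ne_of_gt hxy)] at hflip
            exact absurd hflip (not_lt.mpr (le_of_lt (lt_trans hab hxy)))
          · by_cases hya : y = a
            · subst hya
              rw [hs, Equiv.swap_apply_left,
                Equiv.swap_apply_of_ne_of_ne hxa (ne_of_lt (lt_trans hxy hab))] at hflip
              exact absurd hflip (not_lt.mpr (le_of_lt (lt_trans hxy hab)))
            · rw [hs, Equiv.swap_apply_of_ne_of_ne hxa hxb,
                Equiv.swap_apply_of_ne_of_ne hya hyb] at hflip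
              exact absurd hflip (not_lt.mpr hxy.le)
  -- split into flipped and unflipped parts
  have split : ∀ g : Equiv.Perm (Fin m), invLength g
      = (Finset.univ.filter fun p : Fin m × Fin m =>
          (p.1 < p.2 ∧ g p.2 < g p.1) ∧ p ∈ F).card
        + (Finset.univ.filter fun p : Fin m × Fin m =>
          (p.1 < p.2 ∧ g p.2 < g p.1) ∧ p ∉ F).card := by
    intro g
    have h := Finset.card_filter_add_card_filter_not
      (s := Finset.univ.filter (fun p : Fin m × Fin m => p.1 < p.2 ∧ g p.2 < g p.1))
      (p := fun p => p ∈ F)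
    rw [Finset.filter_filter, Finset.filter_filter] at h
    rw [invLength, ← h]
  -- the unflipped parts coincide via p ↦ (s p.1, s p.2)
  have bij : (Finset.univ.filter fun p : Fin m × Fin m =>
        (p.1 < p.2 ∧ π' p.2 < π' p.1) ∧ p ∉ F).card
      = (Finset.univ.filter fun p : Fin m × Fin m =>
        (p.1 < p.2 ∧ π p.2 < π p.1) ∧ p ∉ F).card := by
    apply Finset.card_nbij' (fun p => (s p.1, s p.2)) (fun p => (s p.1, s p.2))
    · intro p hp
      rw [Finset.mem_coe, Finset.mem_filter] at hp ⊢
      obtain ⟨-, ⟨hlt, hinv⟩, hnF⟩ := hp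
      rw [memF] at hnF
      push_neg at hnF
      have hne : s p.1 ≠ s p.2 := fun h => (ne_of_lt hlt) (s.injective h)
      have hss : s p.1 < s p.2 := lt_of_le_of_ne (hnF hlt) hne
      refine ⟨Finset.mem_univ _, ⟨hss, ?_⟩, ?_⟩
      · simpa [hπ', Equiv.Perm.mul_apply] using hinv
      · rw [memF]
        push_neg
        intro _
        simp only [hs, Equiv.swap_apply_self]
        exact hlt.le
    · intro p hp
      rw [Finset.mem_coe, Finset.mem_filter] at hp ⊢
      obtain ⟨-, ⟨hlt, hinv⟩, hnF⟩ := hp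
      rw [memF] at hnF
      push_neg at hnF
      have hne : s p.1 ≠ s p.2 := fun h => (ne_of_lt hlt) (s.injective h)
      have hss : s p.1 < s p.2 := lt_of_le_of_ne (hnF hlt) hne
      refine ⟨Finset.mem_univ _, ⟨hss, ?_⟩, ?_⟩
      · simpa [hπ', Equiv.Perm.mul_apply, hs, Equiv.swap_apply_self] using hinv
      · rw [memF]
        push_neg
        intro _
        simp only [hs, Equiv.swap_apply_self]
        exact hlt.le
    · intro p _; simp [hs, Equiv.swap_apply_self]
    · intro p _; simp [hs, Equiv.swap_apply_self]
  -- compute the flipped parts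
  have hfilterF : ∀ (A : Fin m × Fin m → Prop) [DecidablePred A],
      (Finset.univ.filter fun p => A p ∧ p ∈ F) = F.filter A := by
    intro A _
    ext p
    simp only [Finset.mem_filter, Finset.mem_univ, true_and]
    tauto
  have hinj1 : Function.Injective (fun k : Fin m => ((a, k) : Fin m × Fin m)) := by
    intro k₁ k₂ h; simpa using h
  have hinj2 : Function.Injective (fun k : Fin m => ((k, b) : Fin m × Fin m)) := by
    intro k₁ k₂ h; simpa using h
  have hdisj12 : Disjoint ((Finset.Ioo a b).image fun k => ((a, k) : Fin m × Fin m))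
      ((Finset.Ioo a b).image fun k => ((k, b) : Fin m × Fin m)) := by
    rw [Finset.disjoint_left]
    rintro p hp1 hp2
    rcases Finset.mem_image.mp hp1 with ⟨k, hk, rfl⟩
    rcases Finset.mem_image.mp hp2 with ⟨k', hk', heq⟩
    have h2' : (b : Fin m) = k := congrArg Prod.snd heq
    subst h2'
    exact absurd (Finset.mem_Ioo.mp hk).2 (lt_irrefl _)
  have hdisj3 : Disjoint (((Finset.Ioo a b).image fun k => ((a, k) : Fin m × Fin m))
      ∪ ((Finset.Ioo a b).image fun k => ((k, b) : Fin m × Fin m)))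
      ({((a, b) : Fin m × Fin m)} : Finset (Fin m × Fin m)) := by
    rw [Finset.disjoint_right]
    intro p hp hp'
    rw [Finset.mem_singleton] at hp
    subst hp
    rcases Finset.mem_union.mp hp' with h1 | h2
    · rcases Finset.mem_image.mp h1 with ⟨k, hk, heq⟩
      have h1' : k = b := congrArg Prod.snd heq
      subst h1'
      exact absurd (Finset.mem_Ioo.mp hk).2 (lt_irrefl _)
    · rcases Finset.mem_image.mp h2 with ⟨k, hk, heq⟩
      have h2' : k = a := congrArg Prod.fst heq
      subst h2'
      exact absurd (Finset.mem_Ioo.mp hk).1 (lt_irrefl _)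
  have cardF : ∀ (A : Fin m × Fin m → Prop) [DecidablePred A],
      (F.filter A).card
        = ((Finset.Ioo a b).filter fun k => A (a, k)).card
          + ((Finset.Ioo a b).filter fun k => A (k, b)).card
          + (if A (a, b) then 1 else 0) := by
    intro A _
    have hd12' := Finset.disjoint_filter_filter (p := A) (q := A) hdisj12
    have hd3' : Disjoint
        ((Finset.filter A ((Finset.Ioo a b).image fun k => ((a, k) : Fin m × Fin m)))
          ∪ (Finset.filter A ((Finset.Ioo a b).image fun k => ((k, b) : Fin m × Fin m))))
        (Finset.filter A ({((a, b) : Fin m × Fin m)} : Finset (Fin m × Fin m))) := by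
      rw [← Finset.filter_union]
      exact Finset.disjoint_filter_filter hdisj3
    rw [hF, Finset.filter_union, Finset.filter_union,
      Finset.card_union_of_disjoint hd3',
      Finset.card_union_of_disjoint hd12',
      Finset.filter_image, Finset.filter_image,
      Finset.card_image_of_injective _ hinj1, Finset.card_image_of_injective _ hinj2,
      Finset.filter_singleton]
    by_cases hA : A (a, b) <;> simp [hA]
  have key1 := cardF (fun p => p.1 < p.2 ∧ π p.2 < π p.1)
  have key2 := cardF (fun p => p.1 < p.2 ∧ π' p.2 < π' p.1)
  have ea1 : ((Finset.Ioo a b).filter fun k => a < k ∧ π k < π a)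
      = ((Finset.Ioo a b).filter fun k => π k < π a) := by
    apply Finset.filter_congr
    intro k hk
    simp [(Finset.mem_Ioo.mp hk).1]
  have ea2 : ((Finset.Ioo a b).filter fun k => k < b ∧ π b < π k)
      = ((Finset.Ioo a b).filter fun k => π b < π k) := by
    apply Finset.filter_congr
    intro k hk
    simp [(Finset.mem_Ioo.mp hk).2]
  have eb1 : ((Finset.Ioo a b).filter fun k => a < k ∧ π' k < π' a)
      = ((Finset.Ioo a b).filter fun k => π k < π b) := by
    apply Finset.filter_congr
    intro k hk
    rcases Finset.mem_Ioo.mp hk with ⟨h1, h2⟩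
    rw [hπ'k k (ne_of_gt h1) (ne_of_lt h2), hπ'a]
    simp [h1]
  have eb2 : ((Finset.Ioo a b).filter fun k => k < b ∧ π' b < π' k)
      = ((Finset.Ioo a b).filter fun k => π a < π k) := by
    apply Finset.filter_congr
    intro k hk
    rcases Finset.mem_Ioo.mp hk with ⟨h1, h2⟩
    rw [hπ'k k (ne_of_gt h1) (ne_of_lt h2), hπ'b]
    simp [h2]
  rw [ea1, ea2, if_pos ⟨hab, hv⟩] at key1
  rw [eb1, eb2, if_neg (fun hcon => absurd hcon.2 (by rw [hπ'a, hπ'b]; exact not_lt.mpr hv.le))]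
    at key2
  have split1 : ((Finset.Ioo a b).filter fun k => π k < π a).card
      = ((Finset.Ioo a b).filter fun k => π k < π b).card
        + ((Finset.Ioo a b).filter fun k => π b < π k ∧ π k < π a).card := by
    rw [← Finset.card_union_of_disjoint]
    · congr 1
      ext k
      simp only [Finset.mem_union, Finset.mem_filter, Finset.mem_Ioo]
      constructor
      · rintro ⟨⟨h1, h2⟩, h3⟩
        have hne : π k ≠ π b := fun h => (ne_of_lt h2) (π.injective h)
        rcases lt_trichotomy (π k) (π b) with h | h | h
        · exact Or.inl ⟨⟨h1, h2⟩, h⟩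
        · exact absurd h hne
        · exact Or.inr ⟨⟨h1, h2⟩, h, h3⟩
      · rintro (⟨⟨h1, h2⟩, h3⟩ | ⟨⟨h1, h2⟩, h3, h4⟩)
        · exact ⟨⟨h1, h2⟩, lt_trans h3 hv⟩
        · exact ⟨⟨h1, h2⟩, h4⟩
    · rw [Finset.disjoint_left]
      rintro k h1 h2
      rw [Finset.mem_filter] at h1 h2
      exact absurd h1.2 (not_lt.mpr h2.2.1.le)
  have split2 : ((Finset.Ioo a b).filter fun k => π b < π k).card
      = ((Finset.Ioo a b).filter fun k => π a < π k).card
        + ((Finset.Ioo a b).filter fun k => π b < π k ∧ π k < π a).card := by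
    rw [← Finset.card_union_of_disjoint]
    · congr 1
      ext k
      simp only [Finset.mem_union, Finset.mem_filter, Finset.mem_Ioo]
      constructor
      · rintro ⟨⟨h1, h2⟩, h3⟩
        have hne : π k ≠ π a := fun h => (ne_of_gt h1) (π.injective h)
        rcases lt_trichotomy (π k) (π a) with h | h | h
        · exact Or.inr ⟨⟨h1, h2⟩, h3, h⟩
        · exact absurd h hne
        · exact Or.inl ⟨⟨h1, h2⟩, h⟩
      · rintro (⟨⟨h1, h2⟩, h3⟩ | ⟨⟨h1, h2⟩, h3, h4⟩)
        · exact ⟨⟨h1, h2⟩, lt_trans hv h3⟩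
        · exact ⟨⟨h1, h2⟩, h3⟩
    · rw [Finset.disjoint_left]
      rintro k h1 h2
      rw [Finset.mem_filter] at h1 h2
      exact absurd h1.2 (not_lt.mpr h2.2.2.le)
  have s1 := split π
  have s2 := split π'
  rw [hfilterF] at s1
  rw [hfilterF] at s2
  rw [s1, s2, bij, key1, key2, split1, split2]
  ring

/-- CL2, ascent form. -/
lemma invLength_mul_swap_gt (π : Equiv.Perm (Fin m)) {a b : Fin m} (hab : a < b)
    (hv : π a < π b) :
    invLength (π * Equiv.swap a b) = invLength π + 1
      + 2 * (((Finset.Ioo a b)).filter fun k => π a < π k ∧ π k < π b).card := by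
  have hv' : (π * Equiv.swap a b) b < (π * Equiv.swap a b) a := by
    simpa [Equiv.Perm.mul_apply] using hv
  have h := invLength_mul_swap_lt (π * Equiv.swap a b) hab hv'
  rw [mul_assoc, Equiv.swap_mul_self, mul_one] at h
  have e : (((Finset.Ioo a b)).filter fun k =>
        (π * Equiv.swap a b) b < (π * Equiv.swap a b) k ∧
        (π * Equiv.swap a b) k < (π * Equiv.swap a b) a)
      = ((Finset.Ioo a b)).filter fun k => π a < π k ∧ π k < π b := by
    apply Finset.filter_congr
    intro k hk
    rcases Finset.mem_Ioo.mp hk with ⟨h1, h2⟩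
    simp [Equiv.Perm.mul_apply, Equiv.swap_apply_left, Equiv.swap_apply_right,
      Equiv.swap_apply_of_ne_of_ne (ne_of_gt h1) (ne_of_lt h2)]
  rw [e] at h
  exact h

/-- rank matrix of an involution is symmetric -/
lemma rkm_symm {π : Equiv.Perm (Fin m)} (h2 : π * π = 1) (i j : Fin m) :
    rkm π i j = rkm π j i := by
  have hππ : ∀ x, π (π x) = x := by
    intro x
    have := congrArg (fun g : Equiv.Perm (Fin m) => g x) h2
    simpa [Equiv.Perm.mul_apply] using this
  unfold rkm
  apply Finset.card_nbij' (fun k => π k) (fun k => π k)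
  · intro k hk
    rw [Finset.mem_coe, Finset.mem_filter] at hk ⊢
    exact ⟨Finset.mem_univ _, hk.2.2, by rw [hππ]; exact hk.2.1⟩
  · intro k hk
    rw [Finset.mem_coe, Finset.mem_filter] at hk ⊢
    exact ⟨Finset.mem_univ _, hk.2.2, by rw [hππ]; exact hk.2.1⟩
  · intro k _; exact hππ k
  · intro k _; exact hππ k

section conj

variable (π : Equiv.Perm (Fin m)) {a b c d : Fin m}

/-- conjugation by a transposition as two position swaps, for an involution-like
configuration `π a = c, π c = a, π b = d, π d = b` with `a,b,c,d` distinct. -/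
lemma conj_swap_eq (ha : π a = c) (hc : π c = a) (hb : π b = d) (hd : π d = b)
    (dab : a ≠ b) (dac : a ≠ c) (dad : a ≠ d) (dbc : b ≠ c) (dbd : b ≠ d) (dcd : c ≠ d) :
    Equiv.swap a b * π * Equiv.swap a b = π * Equiv.swap c d * Equiv.swap a b := by
  have s1 : Equiv.swap a b a = b := Equiv.swap_apply_left _ _
  have s2 : Equiv.swap a b b = a := Equiv.swap_apply_right _ _
  have s3 : Equiv.swap a b c = c :=
    Equiv.swap_apply_of_ne_of_ne (fun h => dac h.symm) (fun h => dbc h.symm)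
  have s4 : Equiv.swap a b d = d :=
    Equiv.swap_apply_of_ne_of_ne (fun h => dad h.symm) (fun h => dbd h.symm)
  have t1 : Equiv.swap c d a = a := Equiv.swap_apply_of_ne_of_ne dac dad
  have t2 : Equiv.swap c d b = b := Equiv.swap_apply_of_ne_of_ne dbc dbd
  have t3 : Equiv.swap c d c = d := Equiv.swap_apply_left _ _
  have t4 : Equiv.swap c d d = c := Equiv.swap_apply_right _ _
  ext x
  simp only [Equiv.Perm.mul_apply]
  by_cases hxa : x = a
  · subst hxa; rw [s1, hb, s4, t2, hb]
  · by_cases hxb : x = b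
    · subst hxb; rw [s2, ha, s3, t1, ha]
    · rw [Equiv.swap_apply_of_ne_of_ne hxa hxb]
      by_cases hxc : x = c
      · subst hxc; rw [hc, s1, t3, hd]
      · by_cases hxd : x = d
        · subst hxd; rw [hd, s2, t4, hc]
        · rw [Equiv.swap_apply_of_ne_of_ne hxc hxd]
          have h1 : π x ≠ a := fun h => hxc (π.injective (by rw [h, hc]))
          have h2 : π x ≠ b := fun h => hxd (π.injective (by rw [h, hd]))
          rw [Equiv.swap_apply_of_ne_of_ne h1 h2]

/-- rkm relation for conjugation by a transposition (π the lower element). -/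
lemma rkm_conj (ha : π a = c) (hc : π c = a) (hb : π b = d) (hd : π d = b)
    (hab : a < b) (hcd : c < d)
    (dac : a ≠ c) (dad : a ≠ d) (dbc : b ≠ c) (dbd : b ≠ d) (i j : Fin m) :
    rkm π i j = rkm (Equiv.swap a b * π * Equiv.swap a b) i j
      + (if c ≤ i ∧ i < d ∧ a ≤ j ∧ j < b then 1 else 0)
      + (if a ≤ i ∧ i < b ∧ c ≤ j ∧ j < d then 1 else 0) := by
  have heq := conj_swap_eq π ha hc hb hd hab.ne dac dad dbc dbd hcd.ne
  have step1 := rkm_mul_swap_gt π hcd (by rw [hc, hd]; exact hab) i j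
  rw [hc, hd] at step1
  have hva : (π * Equiv.swap c d) a = c := by
    rw [Equiv.Perm.mul_apply, Equiv.swap_apply_of_ne_of_ne dac dad, ha]
  have hvb : (π * Equiv.swap c d) b = d := by
    rw [Equiv.Perm.mul_apply, Equiv.swap_apply_of_ne_of_ne dbc dbd, hb]
  have step2 := rkm_mul_swap_gt (π * Equiv.swap c d) hab (by rw [hva, hvb]; exact hcd) i j
  rw [hva, hvb] at step2
  rw [step2, ← heq] at step1
  rw [step1]
  ring

/-- conjugation of an involution configuration: length increases by at least 2,
and exactly 2 when the two middle sets are empty. -/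
lemma invLength_conj (ha : π a = c) (hc : π c = a) (hb : π b = d) (hd : π d = b)
    (hab : a < b) (hcd : c < d)
    (dac : a ≠ c) (dad : a ≠ d) (dbc : b ≠ c) (dbd : b ≠ d) :
    invLength (Equiv.swap a b * π * Equiv.swap a b) = invLength π + 2
      + 2 * (((Finset.Ioo c d)).filter fun k => a < π k ∧ π k < b).card
      + 2 * (((Finset.Ioo a b)).filter fun k =>
          c < (π * Equiv.swap c d) k ∧ (π * Equiv.swap c d) k < d).card := by
  have heq := conj_swap_eq π ha hc hb hd hab.ne dac dad dbc dbd hcd.ne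
  have step1 := invLength_mul_swap_gt π hcd (by rw [hc, hd]; exact hab)
  rw [hc, hd] at step1
  have hva : (π * Equiv.swap c d) a = c := by
    rw [Equiv.Perm.mul_apply, Equiv.swap_apply_of_ne_of_ne dac dad, ha]
  have hvb : (π * Equiv.swap c d) b = d := by
    rw [Equiv.Perm.mul_apply, Equiv.swap_apply_of_ne_of_ne dbc dbd, hb]
  have step2 := invLength_mul_swap_gt (π * Equiv.swap c d) hab (by rw [hva, hvb]; exact hcd)
  rw [hva, hvb] at step2
  rw [heq, step2, step1]
  ring

end conj

/-- conjugating an FPF involution by a transposition yields an FPF involution. -/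
lemma isFPF_conj {π : Equiv.Perm (Fin m)} (h : isFPF π) (a b : Fin m) :
    isFPF (Equiv.swap a b * π * Equiv.swap a b) := by
  constructor
  · have h1 := h.1
    calc Equiv.swap a b * π * Equiv.swap a b * (Equiv.swap a b * π * Equiv.swap a b)
        = Equiv.swap a b * π * (Equiv.swap a b * Equiv.swap a b) * π * Equiv.swap a b := by
          group
      _ = Equiv.swap a b * (π * π) * Equiv.swap a b := by rw [Equiv.swap_mul_self]; group
      _ = 1 := by rw [h1, mul_one, Equiv.swap_mul_self]
  · intro x hx
    simp only [Equiv.Perm.mul_apply] at hx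
    have := h.2 (Equiv.swap a b x)
    apply this
    have := congrArg (Equiv.swap a b) hx
    rwa [Equiv.swap_apply_self] at this

lemma card_filter_or (A B C : Fin m → Prop)
    [DecidablePred A] [DecidablePred B] [DecidablePred C]
    (h : ∀ x, A x ↔ (B x ∨ C x)) (hd : ∀ x, ¬(B x ∧ C x)) :
    (Finset.univ.filter A).card = (Finset.univ.filter B).card + (Finset.univ.filter C).card := by
  rw [← Finset.card_union_of_disjoint]
  · congr 1
    ext k
    simp only [Finset.mem_union, Finset.mem_filter, Finset.mem_univ, true_and]
    exact h k
  · rw [Finset.disjoint_left]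
    intro k h1 h2
    rw [Finset.mem_filter] at h1 h2
    exact hd k ⟨h1.2, h2.2⟩

lemma card_filter_pt (Q : Fin m → Prop) [DecidablePred Q] (p : Fin m) :
    (Finset.univ.filter fun k => k = p ∧ Q k).card = if Q p then 1 else 0 := by
  by_cases hQ : Q p
  · rw [if_pos hQ]
    have : (Finset.univ.filter fun k => k = p ∧ Q k) = {p} := by
      ext k
      simp only [Finset.mem_filter, Finset.mem_univ, true_and, Finset.mem_singleton]
      constructor
      · rintro ⟨rfl, -⟩; rfl
      · rintro rfl; exact ⟨rfl, hQ⟩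
    rw [this, Finset.card_singleton]
  · rw [if_neg hQ]
    have : (Finset.univ.filter fun k => k = p ∧ Q k) = ∅ := by
      ext k
      simp only [Finset.mem_filter, Finset.mem_univ, true_and, Finset.notMem_empty, iff_false]
      rintro ⟨rfl, h⟩; exact hQ h
    rw [this, Finset.card_empty]

/-- three-way row split of a rank matrix entry at a row `p ≤ i`. -/
lemma rkm_row_split (g : Equiv.Perm (Fin m)) (p i j : Fin m) (hpi : p ≤ i) :
    rkm g i j = (Finset.univ.filter fun k => k < p ∧ g k ≤ j).card
      + (if g p ≤ j then 1 else 0)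
      + (Finset.univ.filter fun k => p < k ∧ k ≤ i ∧ g k ≤ j).card := by
  unfold rkm
  rw [card_filter_or (fun k => k ≤ i ∧ g k ≤ j)
    (fun k => k < p ∧ g k ≤ j) (fun k => p ≤ k ∧ k ≤ i ∧ g k ≤ j) ?h1 ?hd1]
  · rw [card_filter_or (fun k => p ≤ k ∧ k ≤ i ∧ g k ≤ j)
      (fun k => k = p ∧ g k ≤ j) (fun k => p < k ∧ k ≤ i ∧ g k ≤ j) ?h2 ?hd2]
    · rw [card_filter_pt]; ring
    case h2 =>
      intro x
      simp only [Fin.le_def, Fin.lt_def, Fin.ext_iff]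
      constructor
      · rintro ⟨h1, h2, h3⟩
        rcases Nat.eq_or_lt_of_le h1 with h | h
        · exact Or.inl ⟨h.symm, h3⟩
        · exact Or.inr ⟨h, h2, h3⟩
      · rintro (⟨h1, h2⟩ | ⟨h1, h2, h3⟩)
        · exact ⟨le_of_eq h1.symm, by omega, h2⟩
        · exact ⟨le_of_lt h1, h2, h3⟩
    case hd2 =>
      rintro x ⟨⟨h1, -⟩, ⟨h2, -⟩⟩
      rw [h1] at h2
      exact lt_irrefl _ h2
  case h1 =>
    intro x
    simp only [Fin.le_def, Fin.lt_def]
    constructor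
    · rintro ⟨h1, h2⟩
      rcases lt_or_ge x.val p.val with h | h
      · exact Or.inl ⟨h, h2⟩
      · exact Or.inr ⟨h, h1, h2⟩
    · rintro (⟨h1, h2⟩ | ⟨h1, h2, h3⟩)
      · exact ⟨by omega, h2⟩
      · exact ⟨h2, h3⟩
  case hd1 =>
    rintro x ⟨⟨h1, -⟩, ⟨h2, -⟩⟩
    exact absurd h1 (not_lt.mpr h2)

lemma lift {σ ρ : Equiv.Perm (Fin m)} (hσ : isFPF σ) (hρ : isFPF ρ)
    (hle : bruhatLE σ ρ) (hne : σ ≠ ρ) :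
    ∃ p b : Fin m, p < b ∧ p < σ p ∧ σ p ≤ ρ b ∧ ρ b < ρ p ∧
      (Equiv.swap p b * ρ * Equiv.swap p b) p = ρ b ∧
      (Equiv.swap p b * ρ * Equiv.swap p b) b = ρ p ∧
      (∀ k, k < p → σ k = ρ k) ∧
      (∀ k, p < k → σ p ≤ ρ k → ρ k < ρ p → b ≤ k) ∧
      bruhatLE σ (Equiv.swap p b * ρ * Equiv.swap p b) ∧
      bruhatLE (Equiv.swap p b * ρ * Equiv.swap p b) ρ ∧
      (Equiv.swap p b * ρ * Equiv.swap p b) ≠ ρ ∧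
      invLength (Equiv.swap p b * ρ * Equiv.swap p b) + 2 ≤ invLength ρ := by
  classical
  have invσ : ∀ x, σ (σ x) = x := by
    intro x
    have := congrArg (fun g : Equiv.Perm (Fin m) => g x) hσ.1
    simpa [Equiv.Perm.mul_apply] using this
  have invρ : ∀ x, ρ (ρ x) = x := by
    intro x
    have := congrArg (fun g : Equiv.Perm (Fin m) => g x) hρ.1
    simpa [Equiv.Perm.mul_apply] using this
  -- the first difference position p
  have hPne : (Finset.univ.filter fun i => σ i ≠ ρ i).Nonempty := by
    have : ∃ i, σ i ≠ ρ i := by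
      by_contra hh
      push_neg at hh
      exact hne (Equiv.ext hh)
    rcases this with ⟨i, hi⟩
    exact ⟨i, Finset.mem_filter.mpr ⟨Finset.mem_univ _, hi⟩⟩
  set p := (Finset.univ.filter fun i => σ i ≠ ρ i).min' hPne with hpdef
  have hdiff : σ p ≠ ρ p :=
    (Finset.mem_filter.mp (Finset.min'_mem _ hPne)).2
  have hbefore : ∀ k, k < p → σ k = ρ k := by
    intro k hk
    by_contra hcon
    have hpk : p ≤ k := Finset.min'_le (Finset.univ.filter fun i => σ i ≠ ρ i) k
      (Finset.mem_filter.mpr ⟨Finset.mem_univ _, hcon⟩)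
    exact absurd hk (not_lt.mpr hpk)
  have hmatch : ∀ (v : Fin m), (Finset.univ.filter fun k => k < p ∧ ρ k ≤ v)
      = (Finset.univ.filter fun k => k < p ∧ σ k ≤ v) := by
    intro v
    ext k
    simp only [Finset.mem_filter, Finset.mem_univ, true_and]
    constructor
    · rintro ⟨h, h'⟩; exact ⟨h, by rw [hbefore k h]; exact h'⟩
    · rintro ⟨h, h'⟩; exact ⟨h, by rw [← hbefore k h]; exact h'⟩
  have hempty3 : ∀ (g : Equiv.Perm (Fin m)) (j : Fin m),
      (Finset.univ.filter fun k => p < k ∧ k ≤ p ∧ g k ≤ j) = ∅ := by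
    intro g j
    ext k
    simp only [Finset.mem_filter, Finset.mem_univ, true_and, Finset.notMem_empty, iff_false]
    rintro ⟨h1, h2, -⟩
    exact absurd (lt_of_lt_of_le h1 h2) (lt_irrefl _)
  have hfirst : σ p < ρ p := by
    have h1 := hle p (ρ p)
    rw [rkm_row_split σ p p (ρ p) (le_refl p), rkm_row_split ρ p p (ρ p) (le_refl p),
      hempty3, hempty3, hmatch, if_pos (le_refl (ρ p))] at h1
    have h2 : σ p ≤ ρ p := by
      by_contra hcon
      rw [if_neg hcon] at h1
      simp at h1
    exact lt_of_le_of_ne h2 hdiff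
  have hpσ : p < σ p := by
    rcases lt_trichotomy p (σ p) with h | h | h
    · exact h
    · exact absurd h.symm (hσ.2 p)
    · exfalso
      have h2 := hbefore (σ p) h
      rw [invσ p] at h2
      have h3 := congrArg ρ h2
      rw [invρ] at h3
      exact hdiff h3.symm
  have hpρ : p < ρ p := by
    rcases lt_trichotomy p (ρ p) with h | h | h
    · exact h
    · exact absurd h.symm (hρ.2 p)
    · exfalso
      have h2 := hbefore (ρ p) h
      rw [invρ p] at h2
      have h3 := congrArg σ h2
      rw [invσ] at h3
      exact hdiff h3.symm
  -- the minimal position b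
  have hBne : (Finset.univ.filter fun k => p < k ∧ σ p ≤ ρ k ∧ ρ k < ρ p).Nonempty := by
    refine ⟨ρ (σ p), Finset.mem_filter.mpr ⟨Finset.mem_univ _, ?_, ?_, ?_⟩⟩
    · rcases lt_trichotomy p (ρ (σ p)) with h | h | h
      · exact h
      · exfalso
        have h3 := congrArg ρ h
        rw [invρ] at h3
        exact hdiff h3.symm
      · exfalso
        have h2 := hbefore (ρ (σ p)) h
        rw [invρ (σ p)] at h2
        have h4 : ρ (σ p) = p := σ.injective h2
        rw [h4] at h
        exact lt_irrefl _ h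
    · rw [invρ (σ p)]
    · rw [invρ (σ p)]
      exact hfirst
  set b := (Finset.univ.filter fun k => p < k ∧ σ p ≤ ρ k ∧ ρ k < ρ p).min' hBne with hbdef
  have hbmem := Finset.mem_filter.mp (Finset.min'_mem _ hBne)
  have hpb : p < b := hbmem.2.1
  have hDlo : σ p ≤ ρ b := hbmem.2.2.1
  have hDC : ρ b < ρ p := hbmem.2.2.2
  have hmin : ∀ k, p < k → σ p ≤ ρ k → ρ k < ρ p → b ≤ k := fun k h1 h2 h3 =>
    Finset.min'_le (Finset.univ.filter fun k => p < k ∧ σ p ≤ ρ k ∧ ρ k < ρ p) k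
      (Finset.mem_filter.mpr ⟨Finset.mem_univ _, h1, h2, h3⟩)
  -- distinctness
  have dpD : p ≠ ρ b := ne_of_lt (lt_of_lt_of_le hpσ hDlo)
  have dpC : p ≠ ρ p := ne_of_lt hpρ
  have dbD : b ≠ ρ b := (hρ.2 b).symm
  have dbC : b ≠ ρ p := by
    intro h
    have h2 : ρ b = p := by rw [h, invρ]
    rw [h2] at hDlo
    exact absurd hDlo (not_le.mpr hpσ)
  -- τ and its values
  set τ := Equiv.swap p b * ρ * Equiv.swap p b with hτdef
  have hτap : ∀ x, τ x = Equiv.swap p b (ρ (Equiv.swap p b x)) := fun x => rfl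
  have hτp : τ p = ρ b := by
    rw [hτap, Equiv.swap_apply_left,
      Equiv.swap_apply_of_ne_of_ne (Ne.symm dpD) (Ne.symm dbD)]
  have hτb : τ b = ρ p := by
    rw [hτap, Equiv.swap_apply_right,
      Equiv.swap_apply_of_ne_of_ne (Ne.symm dpC) (Ne.symm dbC)]
  have hτD : τ (ρ b) = p := by
    rw [hτap, Equiv.swap_apply_of_ne_of_ne (Ne.symm dpD) (Ne.symm dbD), invρ,
      Equiv.swap_apply_right]
  have hτC : τ (ρ p) = b := by
    rw [hτap, Equiv.swap_apply_of_ne_of_ne (Ne.symm dpC) (Ne.symm dbC), invρ,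
      Equiv.swap_apply_left]
  have hcancel : Equiv.swap p b * τ * Equiv.swap p b = ρ := by
    rw [hτdef, ← mul_assoc, ← mul_assoc, Equiv.swap_mul_self, one_mul, mul_assoc,
      Equiv.swap_mul_self, mul_one]
  -- the value j' = σ p - 1
  have hpσv : (p : ℕ) < (σ p : ℕ) := hpσ
  set j' : Fin m := ⟨(σ p : ℕ) - 1, lt_of_le_of_lt (Nat.sub_le _ _) (σ p).isLt⟩ with hj'def
  have hj' : ∀ v : Fin m, v ≤ j' ↔ v < σ p := by
    intro v
    rw [Fin.le_def, Fin.lt_def]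
    show (v : ℕ) ≤ (σ p : ℕ) - 1 ↔ (v : ℕ) < (σ p : ℕ)
    omega
  have hpj' : p ≤ j' := by
    rw [Fin.le_def]
    show (p : ℕ) ≤ (σ p : ℕ) - 1
    omega
  have hlow : ∀ (g : Equiv.Perm (Fin m)) (i : Fin m),
      rkm g i j' = (Finset.univ.filter fun k => k ≤ i ∧ g k < σ p).card := by
    intro g i
    unfold rkm
    congr 1
    ext k
    simp only [Finset.mem_filter, Finset.mem_univ, true_and, hj']
  have hvalsplit : ∀ (g : Equiv.Perm (Fin m)) (i j : Fin m), σ p ≤ j →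
      rkm g i j = rkm g i j'
        + (Finset.univ.filter fun k => k ≤ i ∧ σ p ≤ g k ∧ g k ≤ j).card := by
    intro g i j hj
    rw [hlow g i]
    unfold rkm
    apply card_filter_or
    · intro x
      constructor
      · rintro ⟨h1, h2⟩
        rcases lt_or_ge (g x) (σ p) with h | h
        · exact Or.inl ⟨h1, h⟩
        · exact Or.inr ⟨h1, h, h2⟩
      · rintro (⟨h1, h2⟩ | ⟨h1, h2, h3⟩)
        · exact ⟨h1, le_trans h2.le hj⟩
        · exact ⟨h1, h3⟩
    · rintro x ⟨⟨-, h1⟩, ⟨-, h2, -⟩⟩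
      exact absurd h1 (not_lt.mpr h2)
  have hstripρ : ∀ i j : Fin m, p ≤ i → i < b → j < ρ p →
      (Finset.univ.filter fun k => k ≤ i ∧ σ p ≤ ρ k ∧ ρ k ≤ j)
        = (Finset.univ.filter fun k => k < p ∧ σ p ≤ σ k ∧ σ k ≤ j) := by
    intro i j hpi hib hj
    ext k
    simp only [Finset.mem_filter, Finset.mem_univ, true_and]
    constructor
    · rintro ⟨h1, h2, h3⟩
      rcases lt_trichotomy k p with h | h | h
      · refine ⟨h, ?_, ?_⟩ <;> rw [hbefore k h] <;> assumption
      · exfalso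
        rw [h] at h3
        exact absurd hj (not_lt.mpr h3)
      · exfalso
        exact absurd (le_trans (hmin k h h2 (lt_of_le_of_lt h3 hj)) h1) (not_le.mpr hib)
    · rintro ⟨h1, h2, h3⟩
      refine ⟨(lt_of_lt_of_le h1 hpi).le, ?_, ?_⟩ <;> rw [← hbefore k h1] <;> assumption
  have hstripσ : ∀ i j : Fin m, p ≤ i → σ p ≤ j →
      (Finset.univ.filter fun k => k < p ∧ σ p ≤ σ k ∧ σ k ≤ j).card + 1
        ≤ (Finset.univ.filter fun k => k ≤ i ∧ σ p ≤ σ k ∧ σ k ≤ j).card := by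
    intro i j hpi hj
    have hsub : insert p (Finset.univ.filter fun k => k < p ∧ σ p ≤ σ k ∧ σ k ≤ j)
        ⊆ (Finset.univ.filter fun k => k ≤ i ∧ σ p ≤ σ k ∧ σ k ≤ j) := by
      intro k hk
      rcases Finset.mem_insert.mp hk with rfl | hk'
      · exact Finset.mem_filter.mpr ⟨Finset.mem_univ _, hpi, le_refl _, hj⟩
      · rcases Finset.mem_filter.mp hk' with ⟨-, h1, h2, h3⟩
        exact Finset.mem_filter.mpr ⟨Finset.mem_univ _, (lt_of_lt_of_le h1 hpi).le, h2, h3⟩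
    have hcard := Finset.card_le_card hsub
    rwa [Finset.card_insert_of_notMem
      (fun hcon => absurd (Finset.mem_filter.mp hcon).2.1 (lt_irrefl _))] at hcard
  have S1 : ∀ i j : Fin m, p ≤ i → i < b → σ p ≤ j → j < ρ p →
      rkm ρ i j + 1 ≤ rkm σ i j := by
    intro i j h1 h2 h3 h4
    rw [hvalsplit ρ i j h3, hvalsplit σ i j h3, hstripρ i j h1 h2 h4]
    have hA := hle i j'
    have hB := hstripσ i j h1 h3
    omega
  have halpha : ∀ i : Fin m, ρ b ≤ i → i < b → i < ρ p →
      rkm ρ j' i + 1 ≤ rkm σ j' i := by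
    intro i hDi hib hiC
    rw [rkm_row_split σ p j' i hpj', rkm_row_split ρ p j' i hpj', hmatch]
    have hite1 : σ p ≤ i := le_trans hDlo hDi
    have hite2 : ¬ (ρ p ≤ i) := not_le.mpr hiC
    rw [if_pos hite1, if_neg hite2]
    have hthird : (Finset.univ.filter fun k => p < k ∧ k ≤ j' ∧ ρ k ≤ i).card
        ≤ (Finset.univ.filter fun k => p < k ∧ k ≤ j' ∧ σ k ≤ i).card := by
      have hj'b : j' < b := by
        rw [Fin.lt_def]
        show (σ p : ℕ) - 1 < (b : ℕ)
        have e1 : (σ p : ℕ) ≤ (ρ b : ℕ) := hDlo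
        have e2 : (ρ b : ℕ) ≤ (i : ℕ) := hDi
        have e3 : (i : ℕ) < (b : ℕ) := hib
        omega
      have hρeq : (Finset.univ.filter fun k => p < k ∧ k ≤ j' ∧ ρ k ≤ i)
          = (Finset.univ.filter fun k => p < k ∧ k ≤ j' ∧ ρ k ≤ j') := by
        ext k
        simp only [Finset.mem_filter, Finset.mem_univ, true_and]
        constructor
        · rintro ⟨h1, h2, h3⟩
          refine ⟨h1, h2, ?_⟩
          rw [hj']
          by_contra hcon
          push_neg at hcon
          have hbk := hmin k h1 hcon (lt_of_le_of_lt h3 hiC)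
          exact absurd (le_trans hbk h2) (not_le.mpr hj'b)
        · rintro ⟨h1, h2, h3⟩
          rw [hj'] at h3
          exact ⟨h1, h2, le_trans h3.le (le_trans hDlo hDi)⟩
      rw [hρeq]
      have hjj := hle j' j'
      rw [rkm_row_split σ p j' j' hpj', rkm_row_split ρ p j' j' hpj', hmatch] at hjj
      have hiσ : ¬ (σ p ≤ j') := by rw [hj']; exact lt_irrefl _
      have hiρ : ¬ (ρ p ≤ j') := by rw [hj']; exact not_lt.mpr hfirst.le
      rw [if_neg hiσ, if_neg hiρ] at hjj
      have hsub : (Finset.univ.filter fun k => p < k ∧ k ≤ j' ∧ σ k ≤ j')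
          ⊆ (Finset.univ.filter fun k => p < k ∧ k ≤ j' ∧ σ k ≤ i) := by
        intro k hk
        rcases Finset.mem_filter.mp hk with ⟨-, h1, h2, h3⟩
        rw [hj'] at h3
        exact Finset.mem_filter.mpr ⟨Finset.mem_univ _, h1, h2,
          le_trans h3.le (le_trans hDlo hDi)⟩
      have := Finset.card_le_card hsub
      omega
    omega
  have S2 : ∀ i j : Fin m, ρ b ≤ i → i < b → i < ρ p → ρ b ≤ j → j < b → j < ρ p →
      rkm ρ i j + 2 ≤ rkm σ i j := by
    intro i j hDi hib hiC hDj hjb hjC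
    have h3 : σ p ≤ j := le_trans hDlo hDj
    have hpi : p ≤ i := (lt_of_lt_of_le hpσ (le_trans hDlo hDi)).le
    rw [hvalsplit ρ i j h3, hvalsplit σ i j h3, hstripρ i j hpi hib hjC]
    have hA : rkm ρ i j' + 1 ≤ rkm σ i j' := by
      rw [rkm_symm hσ.1 i j', rkm_symm hρ.1 i j']
      exact halpha i hDi hib hiC
    have hB := hstripσ i j hpi h3
    omega
  -- assemble
  have hrkmτ : ∀ i j, rkm τ i j = rkm ρ i j
      + (if ρ b ≤ i ∧ i < ρ p ∧ p ≤ j ∧ j < b then 1 else 0)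
      + (if p ≤ i ∧ i < b ∧ ρ b ≤ j ∧ j < ρ p then 1 else 0) := by
    intro i j
    have hrkm := rkm_conj τ hτp hτD hτb hτC hpb hDC dpD dpC dbD dbC i j
    rwa [hcancel] at hrkm
  refine ⟨p, b, hpb, hpσ, hDlo, hDC, hτp, hτb, hbefore, hmin, ?_, ?_, ?_, ?_⟩
  · -- bruhatLE σ τ
    intro i j
    show rkm τ i j ≤ rkm σ i j
    rw [hrkmτ i j]
    by_cases c1 : ρ b ≤ i ∧ i < ρ p ∧ p ≤ j ∧ j < b
    · by_cases c2 : p ≤ i ∧ i < b ∧ ρ b ≤ j ∧ j < ρ p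
      · rw [if_pos c1, if_pos c2]
        have := S2 i j c1.1 c2.2.1 c1.2.1 c2.2.2.1 c1.2.2.2 c2.2.2.2
        omega
      · rw [if_pos c1, if_neg c2]
        have hsymσ := rkm_symm hσ.1 i j
        have hsymρ := rkm_symm hρ.1 i j
        have := S1 j i c1.2.2.1 c1.2.2.2 (le_trans hDlo c1.1) c1.2.1
        omega
    · by_cases c2 : p ≤ i ∧ i < b ∧ ρ b ≤ j ∧ j < ρ p
      · rw [if_neg c1, if_pos c2]
        have := S1 i j c2.1 c2.2.1 (le_trans hDlo c2.2.2.1) c2.2.2.2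
        omega
      · rw [if_neg c1, if_neg c2]
        have := hle i j
        omega
  · -- bruhatLE τ ρ
    intro i j
    show rkm ρ i j ≤ rkm τ i j
    rw [hrkmτ i j]
    omega
  · -- τ ≠ ρ
    show τ ≠ ρ
    intro h
    have := congrArg (fun g : Equiv.Perm (Fin m) => g p) h
    rw [hτp] at this
    exact absurd this (ne_of_lt hDC)
  · -- length
    show invLength τ + 2 ≤ invLength ρ
    have hlen := invLength_conj τ hτp hτD hτb hτC hpb hDC dpD dpC dbD dbC
    rw [hcancel] at hlen
    omega

lemma ite_one_mono {P Q : Prop} [Decidable P] [Decidable Q] (h : P → Q) :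
    (if P then 1 else 0) ≤ (if Q then (1:ℕ) else 0) := by
  by_cases hP : P
  · rw [if_pos hP, if_pos (h hP)]
  · rw [if_neg hP]
    exact Nat.zero_le _

lemma lenA_aux : ∀ (N : ℕ) (σ ρ : Equiv.Perm (Fin m)), invLength ρ ≤ N →
    isFPF σ → isFPF ρ → bruhatLT σ ρ → invLength σ + 2 ≤ invLength ρ := by
  intro N
  induction N with
  | zero =>
    intro σ ρ hN hσ hρ hlt
    obtain ⟨p, b, -, -, -, -, -, -, -, -, -, -, -, hτlen⟩ := lift hσ hρ hlt.1 hlt.2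
    omega
  | succ N IH =>
    intro σ ρ hN hσ hρ hlt
    obtain ⟨p, b, -, -, -, -, -, -, -, -, hLEστ, -, -, hτlen⟩ := lift hσ hρ hlt.1 hlt.2
    by_cases hστ : σ = Equiv.swap p b * ρ * Equiv.swap p b
    · rw [hστ]
      exact hτlen
    · have h2 : bruhatLT σ (Equiv.swap p b * ρ * Equiv.swap p b) := ⟨hLEστ, hστ⟩
      have h3 := IH σ (Equiv.swap p b * ρ * Equiv.swap p b) (by omega) hσ
        (isFPF_conj hρ p b) h2
      omega

lemma lenA {σ ρ : Equiv.Perm (Fin m)} (hσ : isFPF σ) (hρ : isFPF ρ) (h : bruhatLT σ ρ) :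
    invLength σ + 2 ≤ invLength ρ :=
  lenA_aux (invLength ρ) σ ρ le_rfl hσ hρ h

/-- backward direction of the main theorem, sorted case -/
lemma bwd {σ ρ : Equiv.Perm (Fin m)} (hσ : isFPF σ) (hρ : isFPF ρ) {a b : Fin m}
    (hab : a < b) (hconj : ρ = Equiv.swap a b * σ * Equiv.swap a b)
    (hlen : invLength ρ = invLength σ + 2) : fpfCovers σ ρ := by
  have invσ : ∀ x, σ (σ x) = x := by
    intro x
    have := congrArg (fun g : Equiv.Perm (Fin m) => g x) hσ.1
    simpa [Equiv.Perm.mul_apply] using this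
  have hσρ : σ ≠ ρ := by
    intro h
    rw [← h] at hlen
    omega
  have hsab : σ a ≠ b := by
    intro h
    apply hσρ
    have hba : σ b = a := by rw [← h, invσ]
    rw [hconj]
    ext x
    rw [Equiv.Perm.mul_apply, Equiv.Perm.mul_apply]
    by_cases hxa : x = a
    · subst hxa
      rw [Equiv.swap_apply_left, hba, Equiv.swap_apply_left, h]
    · by_cases hxb : x = b
      · subst hxb
        rw [Equiv.swap_apply_right, h, Equiv.swap_apply_right, hba]
      · rw [Equiv.swap_apply_of_ne_of_ne hxa hxb]
        have h1 : σ x ≠ a := fun hh => hxb (by rw [← h, ← hh, invσ])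
        have h2 : σ x ≠ b := fun hh => hxa (by rw [← hba, ← hh, invσ])
        rw [Equiv.swap_apply_of_ne_of_ne h1 h2]
  have hca : σ (σ a) = a := invσ a
  have hdb : σ (σ b) = b := invσ b
  have dac : a ≠ σ a := Ne.symm (hσ.2 a)
  have dbd : b ≠ σ b := Ne.symm (hσ.2 b)
  have dbc : b ≠ σ a := Ne.symm hsab
  have dad : a ≠ σ b := fun h => hsab (by rw [h, hdb])
  have hρx : ∀ x, ρ x = Equiv.swap a b (σ (Equiv.swap a b x)) := by
    intro x
    rw [hconj]
    rfl
  have hρa : ρ a = σ b := by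
    rw [hρx, Equiv.swap_apply_left, Equiv.swap_apply_of_ne_of_ne (Ne.symm dad) (Ne.symm dbd)]
  have hρb : ρ b = σ a := by
    rw [hρx, Equiv.swap_apply_right, Equiv.swap_apply_of_ne_of_ne (Ne.symm dac) (Ne.symm dbc)]
  have hρc : ρ (σ a) = b := by
    rw [hρx, Equiv.swap_apply_of_ne_of_ne (Ne.symm dac) (Ne.symm dbc), hca,
      Equiv.swap_apply_left]
  have hρd : ρ (σ b) = a := by
    rw [hρx, Equiv.swap_apply_of_ne_of_ne (Ne.symm dad) (Ne.symm dbd), hdb,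
      Equiv.swap_apply_right]
  rcases lt_trichotomy (σ a) (σ b) with hcd | hcd | hcd
  · -- σ a < σ b : genuine cover
    have hLE : bruhatLE σ ρ := by
      intro i j
      have h := rkm_conj σ rfl hca rfl hdb hab hcd dac dad dbc dbd i j
      rw [← hconj] at h
      omega
    refine ⟨⟨hLE, hσρ⟩, ?_⟩
    rintro ⟨μ, hμ, h1, h2⟩
    have l1 := lenA hσ hμ h1
    have l2 := lenA hμ hρ h2
    omega
  · exact absurd (σ.injective hcd) hab.ne
  · -- σ b < σ a : contradiction
    exfalso
    have hconj2 : Equiv.swap a b * ρ * Equiv.swap a b = σ := by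
      rw [hconj, ← mul_assoc, ← mul_assoc, Equiv.swap_mul_self, one_mul, mul_assoc,
        Equiv.swap_mul_self, mul_one]
    have hLE : bruhatLE ρ σ := by
      intro i j
      have h := rkm_conj ρ hρa hρd hρb hρc hab hcd dad dac dbd dbc i j
      rw [hconj2] at h
      omega
    have := lenA hρ hσ ⟨hLE, fun h => hσρ h.symm⟩
    omega

/-- forward direction of the main theorem -/
lemma fwd {σ ρ : Equiv.Perm (Fin m)} (hσ : isFPF σ) (hρ : isFPF ρ)
    (hcov : fpfCovers σ ρ) :
    ∃ a b : Fin m, a ≠ b ∧ ρ = Equiv.swap a b * σ * Equiv.swap a b ∧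
      invLength ρ = invLength σ + 2 := by
  obtain ⟨hlt, hnm⟩ := hcov
  obtain ⟨p, b, hpb, hpσ, hDlo, hDC, hτp, hτb, hbefore, hmin, hLEστ, hLEτρ, hτne, hτlen⟩ :=
    lift hσ hρ hlt.1 hlt.2
  set τ := Equiv.swap p b * ρ * Equiv.swap p b with hτdef
  have hτfpf : isFPF τ := isFPF_conj hρ p b
  by_cases hστ : σ = τ
  swap
  · exact absurd ⟨τ, hτfpf, ⟨hLEστ, hστ⟩, ⟨hLEτρ, hτne⟩⟩ hnm
  have invσ : ∀ x, σ (σ x) = x := by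
    intro x
    have := congrArg (fun g : Equiv.Perm (Fin m) => g x) hσ.1
    simpa [Equiv.Perm.mul_apply] using this
  have invρ : ∀ x, ρ (ρ x) = x := by
    intro x
    have := congrArg (fun g : Equiv.Perm (Fin m) => g x) hρ.1
    simpa [Equiv.Perm.mul_apply] using this
  have hcancel : Equiv.swap p b * τ * Equiv.swap p b = ρ := by
    rw [hτdef, ← mul_assoc, ← mul_assoc, Equiv.swap_mul_self, one_mul, mul_assoc,
      Equiv.swap_mul_self, mul_one]
  have hρconj : ρ = Equiv.swap p b * σ * Equiv.swap p b := by
    rw [hστ]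
    exact hcancel.symm
  set D := ρ b with hDdef
  set C := ρ p with hCdef
  have hσp : σ p = D := by rw [hστ]; exact hτp
  have hσb : σ b = C := by rw [hστ]; exact hτb
  have hσD : σ D = p := by rw [← hσp, invσ]
  have hσC : σ C = b := by rw [← hσb, invσ]
  have hpD : p < D := hσp ▸ hpσ
  have hpC : p < C := lt_trans hpD hDC
  have dpD : p ≠ D := hpD.ne
  have dpC : p ≠ C := hpC.ne
  have dbD : b ≠ D := by
    intro h
    have hCp : C = p := by rw [← hσb, h, hσD]
    exact dpC hCp.symm
  have dbC : b ≠ C := fun h => (hσ.2 b) (hσb.trans h.symm)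
  have hρxx : ∀ x, ρ x = Equiv.swap p b (σ (Equiv.swap p b x)) := by
    intro x
    rw [hρconj]
    rfl
  -- no crossing configuration
  have hcross : ¬ (D < b ∧ b < C) := by
    rintro ⟨h1, h2⟩
    have hμx : ∀ x, (Equiv.swap D b * σ * Equiv.swap D b) x
        = Equiv.swap D b (σ (Equiv.swap D b x)) := fun x => rfl
    set μ := Equiv.swap D b * σ * Equiv.swap D b with hμdef
    have hμD : μ D = C := by
      rw [hμx, Equiv.swap_apply_left, hσb,
        Equiv.swap_apply_of_ne_of_ne (hDC.ne') (Ne.symm dbC)]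
    have hμb : μ b = p := by
      rw [hμx, Equiv.swap_apply_right, hσD,
        Equiv.swap_apply_of_ne_of_ne dpD hpb.ne]
    have hμp : μ p = b := by
      rw [hμx, Equiv.swap_apply_of_ne_of_ne dpD hpb.ne, hσp, Equiv.swap_apply_left]
    have hμC : μ C = D := by
      rw [hμx, Equiv.swap_apply_of_ne_of_ne hDC.ne' (Ne.symm dbC), hσC,
        Equiv.swap_apply_right]
    have hLEσμ : bruhatLE σ μ := by
      intro i j
      have h := rkm_conj σ hσD hσp hσb hσC h1 hpC (Ne.symm dpD) hDC.ne
        (Ne.symm hpb.ne) dbC i j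
      rw [← hμdef] at h
      omega
    have hneσμ : σ ≠ μ := fun he => (h1.ne : D ≠ b) (by rw [← hσp, ← hμp, he])
    have hμρconj : Equiv.swap b C * μ * Equiv.swap b C = ρ := by
      apply Equiv.ext
      intro x
      show Equiv.swap b C (μ (Equiv.swap b C x)) = ρ x
      by_cases hxp : x = p
      · subst hxp
        rw [Equiv.swap_apply_of_ne_of_ne hpb.ne dpC, hμp, Equiv.swap_apply_left, ← hCdef]
      · by_cases hxb : x = b
        · subst hxb
          rw [Equiv.swap_apply_left, hμC, Equiv.swap_apply_of_ne_of_ne h1.ne hDC.ne,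
            ← hDdef]
        · by_cases hxC : x = C
          · subst hxC
            rw [Equiv.swap_apply_right, hμb, Equiv.swap_apply_of_ne_of_ne hpb.ne dpC,
              hCdef, invρ]
          · by_cases hxD : x = D
            · subst hxD
              rw [Equiv.swap_apply_of_ne_of_ne (Ne.symm dbD) hDC.ne, hμD,
                Equiv.swap_apply_right, hDdef, invρ]
            · rw [Equiv.swap_apply_of_ne_of_ne hxb hxC]
              have g1 : σ x ≠ D := fun hh => hxp (by rw [← hσD, ← hh, invσ])
              have g2 : σ x ≠ b := fun hh => hxC (by rw [← hσb, ← hh, invσ])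
              have g4 : σ x ≠ C := fun hh => hxb (by rw [← hσC, ← hh, invσ])
              have g5 : σ x ≠ p := fun hh => hxD (by rw [← hσp, ← hh, invσ])
              have e1 : μ x = σ x := by
                rw [hμx, Equiv.swap_apply_of_ne_of_ne hxD hxb,
                  Equiv.swap_apply_of_ne_of_ne g1 g2]
              rw [e1, Equiv.swap_apply_of_ne_of_ne g2 g4, hρxx,
                Equiv.swap_apply_of_ne_of_ne hxp hxb,
                Equiv.swap_apply_of_ne_of_ne g5 g2]
    have hLEμρ : bruhatLE μ ρ := by
      intro i j
      have h := rkm_conj μ hμb hμp hμC hμD h2 hpD (Ne.symm hpb.ne) dbD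
        (Ne.symm dpC) hDC.ne' i j
      rw [hμρconj] at h
      omega
    have hneμρ : μ ≠ ρ := by
      intro he
      have : μ p = ρ p := by rw [he]
      rw [hμp, ← hCdef] at this
      exact dbC this
    exact hnm ⟨μ, isFPF_conj hσ D b, ⟨hLEσμ, hneσμ⟩, ⟨hLEμρ, hneμρ⟩⟩
  -- no middle witnesses
  have hW : ∀ k, p < k → k < b → k ≠ D → k ≠ C → ¬(D < σ k ∧ σ k < C) := by
    rintro k hk1 hk2 hk3 hk4 ⟨he1, he2⟩
    have hσe : σ (σ k) = k := invσ k
    have dpe : p ≠ σ k := (lt_trans hpD he1).ne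
    have dke : k ≠ σ k := Ne.symm (hσ.2 k)
    have deb : σ k ≠ b := fun h => hk4 (by rw [← hσe, h, hσb])
    have hsmall := fun i j => rkm_conj σ hσp hσD rfl hσe hk1 he1 dpD dpe hk3 dke i j
    have hbig := fun i j => rkm_conj σ hσp hσD hσb hσC hpb hDC dpD dpC dbD dbC i j
    have hbig' : ∀ i j, rkm σ i j = rkm ρ i j
        + (if D ≤ i ∧ i < C ∧ p ≤ j ∧ j < b then 1 else 0)
        + (if p ≤ i ∧ i < b ∧ D ≤ j ∧ j < C then 1 else 0) := by
      intro i j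
      have h := hbig i j
      rwa [← hρconj] at h
    set μ' := Equiv.swap p k * σ * Equiv.swap p k with hμ'def
    have hμ'x : ∀ x, μ' x = Equiv.swap p k (σ (Equiv.swap p k x)) := fun x => rfl
    have hμ'p : μ' p = σ k := by
      rw [hμ'x, Equiv.swap_apply_left, Equiv.swap_apply_of_ne_of_ne (Ne.symm dpe) dke.symm]
    have hμ'k : μ' k = D := by
      rw [hμ'x, Equiv.swap_apply_right, hσp,
        Equiv.swap_apply_of_ne_of_ne (Ne.symm dpD) (Ne.symm hk3)]
    have hLEσμ' : bruhatLE σ μ' := by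
      intro i j
      have h := hsmall i j
      omega
    have hneσμ' : σ ≠ μ' := by
      intro he
      have : σ p = μ' p := by rw [he]
      rw [hσp, hμ'p] at this
      exact he1.ne this
    have hLEμ'ρ : bruhatLE μ' ρ := by
      intro i j
      have h1 := hsmall i j
      have h2 := hbig' i j
      have i1 : (if D ≤ i ∧ i < σ k ∧ p ≤ j ∧ j < k then 1 else 0)
          ≤ (if D ≤ i ∧ i < C ∧ p ≤ j ∧ j < b then (1:ℕ) else 0) :=
        ite_one_mono (fun ⟨x1, x2, x3, x4⟩ => ⟨x1, lt_trans x2 he2, x3, lt_trans x4 hk2⟩)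
      have i2 : (if p ≤ i ∧ i < k ∧ D ≤ j ∧ j < σ k then 1 else 0)
          ≤ (if p ≤ i ∧ i < b ∧ D ≤ j ∧ j < C then (1:ℕ) else 0) :=
        ite_one_mono (fun ⟨x1, x2, x3, x4⟩ => ⟨x1, lt_trans x2 hk2, x3, lt_trans x4 he2⟩)
      omega
    have hneμ'ρ : μ' ≠ ρ := by
      intro he
      have h1 : μ' k = ρ k := by rw [he]
      have h2 : ρ k = σ k := by
        rw [hρxx, Equiv.swap_apply_of_ne_of_ne (Ne.symm hk1.ne) hk2.ne,
          Equiv.swap_apply_of_ne_of_ne (Ne.symm dpe) deb]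
      rw [hμ'k, h2] at h1
      exact he1.ne h1
    exact hnm ⟨μ', isFPF_conj hσ p k, ⟨hLEσμ', hneσμ'⟩, ⟨hLEμ'ρ, hneμ'ρ⟩⟩
  -- length computation
  have hlen := invLength_conj σ hσp hσD hσb hσC hpb hDC dpD dpC dbD dbC
  rw [← hρconj] at hlen
  have hM1 : ((Finset.Ioo D C).filter fun k => p < σ k ∧ σ k < b) = ∅ := by
    ext k
    simp only [Finset.mem_filter, Finset.mem_Ioo, Finset.notMem_empty, iff_false]
    rintro ⟨⟨hk1, hk2⟩, hs1, hs2⟩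
    have c1 : σ k ≠ D := by
      intro h
      have : k = p := by rw [← hσD, ← h, invσ]
      rw [this] at hk1
      exact absurd hk1 (not_lt.mpr hpD.le)
    have c2 : σ k ≠ C := by
      intro h
      have hkb : k = b := by rw [← hσC, ← h, invσ]
      rw [hkb] at hk1 hk2
      exact hcross ⟨hk1, hk2⟩
    exact hW (σ k) hs1 hs2 c1 c2 ⟨by rw [invσ]; exact hk1, by rw [invσ]; exact hk2⟩
  have hM2 : ((Finset.Ioo p b).filter fun k =>
      D < (σ * Equiv.swap D C) k ∧ (σ * Equiv.swap D C) k < C) = ∅ := by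
    ext k
    simp only [Finset.mem_filter, Finset.mem_Ioo, Finset.notMem_empty, iff_false]
    rintro ⟨⟨hk1, hk2⟩, hs1, hs2⟩
    by_cases hkD : k = D
    · subst hkD
      have e1 : (σ * Equiv.swap D C) D = b := by
        rw [Equiv.Perm.mul_apply, Equiv.swap_apply_left, hσC]
      rw [e1] at hs1 hs2
      exact hcross ⟨hs1, hs2⟩
    · by_cases hkC : k = C
      · subst hkC
        have e1 : (σ * Equiv.swap D C) C = p := by
          rw [Equiv.Perm.mul_apply, Equiv.swap_apply_right, hσD]
        rw [e1] at hs1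
        exact absurd hs1 (not_lt.mpr hpD.le)
      · have e1 : (σ * Equiv.swap D C) k = σ k := by
          rw [Equiv.Perm.mul_apply, Equiv.swap_apply_of_ne_of_ne hkD hkC]
        rw [e1] at hs1 hs2
        exact hW k hk1 hk2 hkD hkC ⟨hs1, hs2⟩
  rw [hM1, hM2] at hlen
  simp only [Finset.card_empty, Nat.mul_zero, Nat.add_zero] at hlen
  exact ⟨p, b, hpb.ne, hρconj, hlen⟩


/-- `ρ` covers `σ` in the Bruhat order restricted to fixed-point-free
involutions iff `ρ` is a conjugate of `σ` by a transposition with `l(ρ) = l(σ) + 2`. -/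
theorem fpf_cover_iff {n : ℕ} (σ ρ : Equiv.Perm (Fin (2*n)))
    (hσ : isFPF σ) (hρ : isFPF ρ) :
    fpfCovers σ ρ ↔
      ∃ a b : Fin (2*n), a ≠ b ∧ ρ = Equiv.swap a b * σ * Equiv.swap a b ∧
        invLength ρ = invLength σ + 2 := by
  constructor
  · exact fwd hσ hρ
  · rintro ⟨a, b, hab, hconj, hlen⟩
    rcases hab.lt_or_gt with h | h
    · exact bwd hσ hρ h hconj hlen
    · rw [Equiv.swap_comm] at hconj
      exact bwd hσ hρ h hconj hlen
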